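/- Let l ∈ ℝ⁴ be lightlike (l·l = 0) and let D_l denote the directional derivative along the vector l (i.e. D_l f(β) = d/dt f(β + t l)|_{t=0}). Then for every m ∈ ℕ and every β ∈ ℝ⁴ with β·β ≠ 0, the m-fold iterate satisfies D_l^m[(β·β)⁻¹] = (−2)^m · m! · (l·β)^m · (β·β)^{−m−1}. -/

import Mathlib

noncomputable section

/-- Minkowski inner product on ℝ⁴: x·y = x₀y₀ − x₁y₁ − x₂y₂ − x₃y₃. -/
def mink (x y : Fin 4 → ℝ) : ℝ := x 0 * y 0 - x 1 * y 1 - x 2 * y 2 - x 3 * y 3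

lemma mink_comm (x y : Fin 4 → ℝ) : mink x y = mink y x := by
  unfold mink; ring

lemma continuous_minkq : Continuous (fun x : Fin 4 → ℝ => mink x x) := by
  unfold mink; fun_prop

def projC (i : Fin 4) : (Fin 4 → ℝ) →L[ℝ] ℝ := ContinuousLinearMap.proj i

lemma hasFDerivAt_minkl (l β : Fin 4 → ℝ) :
    HasFDerivAt (fun x => mink l x)
      (l 0 • projC 0 - l 1 • projC 1 - l 2 • projC 2 - l 3 • projC 3) β := by
  have h : ∀ i : Fin 4, HasFDerivAt (fun x : Fin 4 → ℝ => x i) (projC i) β :=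
    fun i => (projC i).hasFDerivAt
  have := (((h 0).const_mul (l 0)).sub ((h 1).const_mul (l 1))).sub
      ((h 2).const_mul (l 2)) |>.sub ((h 3).const_mul (l 3))
  exact this

lemma hasFDerivAt_minkq (β : Fin 4 → ℝ) :
    HasFDerivAt (fun x => mink x x)
      ((2 * β 0) • projC 0 - (2 * β 1) • projC 1 - (2 * β 2) • projC 2
        - (2 * β 3) • projC 3) β := by
  have h : ∀ i : Fin 4, HasFDerivAt (fun x : Fin 4 → ℝ => x i) (projC i) β :=
    fun i => (projC i).hasFDerivAt
  have hsq : ∀ i : Fin 4, HasFDerivAt (fun x : Fin 4 → ℝ => x i * x i)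
      ((2 * β i) • projC i) β := by
    intro i
    have : HasFDerivAt (fun x : Fin 4 → ℝ => x i * x i) _ β := (h i).mul (h i)
    refine this.congr_fderiv ?_
    ext v
    simp [projC, two_mul]
    ring
  exact (((hsq 0).sub (hsq 1)).sub (hsq 2)).sub (hsq 3)

lemma fderiv_aux (l β : Fin 4 → ℝ) (hl : mink l l = 0) (hβ : mink β β ≠ 0)
    (C : ℝ) (m : ℕ) (z : ℤ) :
    fderiv ℝ (fun x => C * (mink l x) ^ m * (mink x x) ^ z) β l
      = C * (mink l β) ^ m * ((z : ℝ) * (mink β β) ^ (z - 1)) * (2 * mink l β) := by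
  have h1 : HasFDerivAt (fun x => (mink l x) ^ m)
      ((↑m * (mink l β) ^ (m - 1)) •
        (l 0 • projC 0 - l 1 • projC 1 - l 2 • projC 2 - l 3 • projC 3)) β :=
    (hasDerivAt_pow m (mink l β)).comp_hasFDerivAt β (hasFDerivAt_minkl l β)
  have h2 : HasFDerivAt (fun x => (mink x x) ^ z)
      (((z : ℝ) * (mink β β) ^ (z - 1)) •
        ((2 * β 0) • projC 0 - (2 * β 1) • projC 1 - (2 * β 2) • projC 2
          - (2 * β 3) • projC 3)) β :=
    HasDerivAt.comp_hasFDerivAt (f := fun x => mink x x) β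
      (hasDerivAt_zpow z (mink β β) (Or.inl hβ)) (hasFDerivAt_minkq β)
  have h3 : HasFDerivAt (fun x => C * mink l x ^ m * mink x x ^ z) _ β :=
    (h1.const_mul C).mul h2
  rw [h3.fderiv]
  have hll : l 0 * l 0 - l 1 * l 1 - l 2 * l 2 - l 3 * l 3 = 0 := hl
  simp only [ContinuousLinearMap.add_apply, ContinuousLinearMap.smul_apply,
    ContinuousLinearMap.sub_apply, projC, ContinuousLinearMap.proj_apply, smul_eq_mul]
  have hβl : mink β l = mink l β := mink_comm β l
  unfold mink at hβl ⊢
  rw [hll]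
  simp only [mul_zero, add_zero]
  generalize (β 0 * β 0 - β 1 * β 1 - β 2 * β 2 - β 3 * β 3) ^ (z - 1) = Q
  generalize (l 0 * β 0 - l 1 * β 1 - l 2 * β 2 - l 3 * β 3) ^ m = A
  linear_combination (C * A * (z : ℝ) * Q * 2) * hβl

/-- Directional derivative along the vector l. -/
def dirDeriv (l : Fin 4 → ℝ) (f : (Fin 4 → ℝ) → ℝ) (β : Fin 4 → ℝ) : ℝ :=
  fderiv ℝ f β l

/-- For lightlike l (l·l = 0), the m-fold directional derivative of
(β·β)⁻¹ along l equals (−2)^m · m! · (l·β)^m · (β·β)^{−m−1} at every β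
with β·β ≠ 0. -/
theorem iterated_dirDeriv_inv_minkowski_sq
    (l : Fin 4 → ℝ) (hl : mink l l = 0) (m : ℕ) (β : Fin 4 → ℝ)
    (hβ : mink β β ≠ 0) :
    ((dirDeriv l)^[m] (fun β' => (mink β' β')⁻¹)) β
      = (-2 : ℝ) ^ m * (Nat.factorial m : ℝ) * (mink l β) ^ m
          * (mink β β) ^ (-(m : ℤ) - 1) := by
  induction m generalizing β with
  | zero =>
      simp [zpow_neg, zpow_one]
  | succ n ih =>
      rw [Function.iterate_succ_apply']
      show fderiv ℝ ((dirDeriv l)^[n] (fun β' => (mink β' β')⁻¹)) β l = _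
      have hev : (dirDeriv l)^[n] (fun β' => (mink β' β')⁻¹)
          =ᶠ[nhds β] fun x => ((-2 : ℝ) ^ n * (Nat.factorial n : ℝ)) * (mink l x) ^ n
            * (mink x x) ^ (-(n : ℤ) - 1) := by
        have h0 : ∀ᶠ x in nhds β, mink x x ≠ 0 :=
          continuous_minkq.continuousAt.eventually_ne hβ
        filter_upwards [h0] with x hx
        rw [ih x hx]
      rw [hev.fderiv_eq, fderiv_aux l β hl hβ _ n _]
      have hfac : (Nat.factorial (n + 1) : ℝ) = (n + 1) * Nat.factorial n := by
        push_cast [Nat.factorial_succ]; ring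
      have hze : (-(n : ℤ) - 1) - 1 = -((n : ℕ) + 1 : ℕ) - 1 := by push_cast; ring
      have hzc : ((-(n : ℤ) - 1 : ℤ) : ℝ) = -((n : ℝ) + 1) := by push_cast; ring
      rw [hze, hzc, hfac]
      generalize (mink β β) ^ (-(((n : ℕ) + 1 : ℕ)) - 1 : ℤ) = Q
      ring
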